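/- arXiv:1601.06480 — 2 statements merged into one kernel-verified Lean document; each statement's English description precedes it below -/
import Mathlib

section
/- Let k be a positive integer. For every positive integer n, n \cdot p_k(n) = \sum_{m=1}^{n} \sigma^{(k)}(m) \, p_k(n - m). -/
open Finset

/-- `p n` is the number of partitions of `n`. -/
def p (n : ℕ) : ℕ := Fintype.card (Nat.Partition n)

/-- `pColor k n` is the number of two-color partitions of `n` where the second color
appears only in parts that are multiples of `k`:
`pColor k n = ∑_{i + kj = n, i, j ≥ 0} p i * p j`. -/
def pColor (k n : ℕ) : ℕ :=
  ∑ ij ∈ (range (n + 1) ×ˢ range (n + 1)).filter (fun ij => ij.1 + k * ij.2 = n),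
    p ij.1 * p ij.2

/-- `sigmaLabeled k m` is the sum of `k`-labeled divisors of `m`: each divisor of `m`
that is a multiple of `k` is counted twice. -/
def sigmaLabeled (k m : ℕ) : ℕ :=
  (∑ d ∈ m.divisors, d) + ∑ d ∈ m.divisors.filter (fun d => k ∣ d), d

def removeEquiv (n d j : ℕ) (hd : 0 < d) (h : d * j ≤ n) :
    {lam : Nat.Partition n // j ≤ lam.parts.count d} ≃ Nat.Partition (n - d * j) where
  toFun lam := ⟨lam.1.parts - Multiset.replicate j d,
    fun hi => lam.1.parts_pos (Multiset.mem_of_le tsub_le_self hi),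
    by
      have hle : Multiset.replicate j d ≤ lam.1.parts :=
        (Multiset.le_count_iff_replicate_le).mp lam.2
      have h1 : (lam.1.parts - Multiset.replicate j d) + Multiset.replicate j d
          = lam.1.parts := tsub_add_cancel_of_le hle
      have h2 := congrArg Multiset.sum h1
      rw [Multiset.sum_add, lam.1.parts_sum, Multiset.sum_replicate, smul_eq_mul] at h2
      have hc : j * d = d * j := mul_comm j d
      omega⟩
  invFun mu := ⟨⟨mu.parts + Multiset.replicate j d,
    fun hi => by
      rcases Multiset.mem_add.mp hi with h' | h'
      · exact mu.parts_pos h'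
      · rwa [Multiset.eq_of_mem_replicate h'],
    by
      rw [Multiset.sum_add, mu.parts_sum, Multiset.sum_replicate, smul_eq_mul]
      have hc : j * d = d * j := mul_comm j d
      omega⟩,
    by
      simp [Multiset.count_add, Multiset.count_replicate]⟩
  left_inv lam := by
    apply Subtype.ext
    apply Nat.Partition.ext
    have hle : Multiset.replicate j d ≤ lam.1.parts :=
      (Multiset.le_count_iff_replicate_le).mp lam.2
    simp [tsub_add_cancel_of_le hle]
  right_inv mu := by
    apply Nat.Partition.ext
    simp

lemma replicate_le_sum (s : Multiset ℕ) (c d : ℕ) (h : Multiset.replicate c d ≤ s) :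
    c * d ≤ s.sum := by
  obtain ⟨u, rfl⟩ := Multiset.le_iff_exists_add.mp h
  rw [Multiset.sum_add, Multiset.sum_replicate, smul_eq_mul]
  exact Nat.le_add_right _ _

lemma count_mul_le (n d : ℕ) (lam : Nat.Partition n) : lam.parts.count d * d ≤ n := by
  have hle : Multiset.replicate (lam.parts.count d) d ≤ lam.parts :=
    (Multiset.le_count_iff_replicate_le).mp le_rfl
  have := replicate_le_sum _ _ _ hle
  rwa [lam.parts_sum] at this

lemma card_count_ge (n d j : ℕ) (hd : 0 < d) (hj : 0 < j) :
    Fintype.card {lam : Nat.Partition n // j ≤ lam.parts.count d} =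
      if d * j ≤ n then p (n - d * j) else 0 := by
  split_ifs with h
  · exact Fintype.card_congr (removeEquiv n d j hd h)
  · rw [Fintype.card_eq_zero_iff]
    constructor
    intro ⟨lam, hlam⟩
    have h1 := count_mul_le n d lam
    have : j * d ≤ lam.parts.count d * d := Nat.mul_le_mul_right d hlam
    have hc : j * d = d * j := mul_comm j d
    omega

lemma sum_ite_le (c n : ℕ) (h : c ≤ n) :
    ∑ j ∈ Icc 1 n, (if j ≤ c then 1 else 0) = c := by
  rw [← Finset.sum_filter]
  have : (Icc 1 n).filter (fun j => j ≤ c) = Icc 1 c := by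
    ext j; simp; omega
  simp [this]

lemma sum_count (n d : ℕ) (hd : 0 < d) :
    ∑ lam : Nat.Partition n, lam.parts.count d
      = ∑ j ∈ Icc 1 n, if d * j ≤ n then p (n - d * j) else 0 := by
  have h1 : ∀ lam : Nat.Partition n, lam.parts.count d
      = ∑ j ∈ Icc 1 n, (if j ≤ lam.parts.count d then 1 else 0) := by
    intro lam
    rw [sum_ite_le]
    have := count_mul_le n d lam
    calc lam.parts.count d ≤ lam.parts.count d * d := Nat.le_mul_of_pos_right _ hd
      _ ≤ n := this
  calc ∑ lam : Nat.Partition n, lam.parts.count d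
      = ∑ lam : Nat.Partition n, ∑ j ∈ Icc 1 n, (if j ≤ lam.parts.count d then 1 else 0) := by
        exact Finset.sum_congr rfl (fun lam _ => h1 lam)
    _ = ∑ j ∈ Icc 1 n, ∑ lam : Nat.Partition n, (if j ≤ lam.parts.count d then 1 else 0) :=
        Finset.sum_comm
    _ = ∑ j ∈ Icc 1 n, if d * j ≤ n then p (n - d * j) else 0 := by
        refine Finset.sum_congr rfl (fun j hj => ?_)
        simp only [mem_Icc] at hj
        rw [← card_count_ge n d j hd hj.1]
        rw [Fintype.card_subtype, Finset.card_eq_sum_ones, Finset.sum_filter]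

lemma sum_mul_count (n : ℕ) (s : Multiset ℕ) (hpos : ∀ i ∈ s, 0 < i) (hs : s.sum = n) :
    ∑ d ∈ Icc 1 n, d * s.count d = n := by
  have hsub : s.toFinset ⊆ Icc 1 n := by
    intro a ha
    rw [Multiset.mem_toFinset] at ha
    rw [mem_Icc]
    exact ⟨hpos a ha, hs ▸ Multiset.single_le_sum (fun x _ => Nat.zero_le x) a ha⟩
  rw [← Finset.sum_subset hsub (fun x _ hx => by
    rw [Multiset.count_eq_zero_of_notMem (fun hm => hx (Multiset.mem_toFinset.mpr hm))]
    ring)]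
  conv_rhs => rw [← hs, ← Multiset.toFinset_sum_count_nsmul_eq s]
  rw [Multiset.sum_sum]
  refine Finset.sum_congr rfl fun x _ => ?_
  rw [Multiset.sum_nsmul, Multiset.sum_singleton, smul_eq_mul, mul_comm]

lemma regroup (n : ℕ) (f : ℕ → ℕ → ℕ) :
    ∑ d ∈ Icc 1 n, ∑ j ∈ Icc 1 n, (if d * j ≤ n then f d (d * j) else 0)
      = ∑ m ∈ Icc 1 n, ∑ x ∈ m.divisorsAntidiagonal, f x.1 m := by
  rw [← Finset.sum_product']
  rw [← Finset.sum_filter]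
  rw [← Finset.sum_sigma (Icc 1 n) (fun m => m.divisorsAntidiagonal) (fun x => f x.2.1 x.1)]
  refine Finset.sum_nbij' (i := fun q => ⟨q.1 * q.2, q⟩) (j := fun x => x.2) ?_ ?_ ?_ ?_ ?_
  · rintro ⟨d, j⟩ hq
    simp only [mem_filter, mem_product, mem_Icc] at hq
    obtain ⟨⟨⟨hd1, hdn⟩, hj1, hjn⟩, hle⟩ := hq
    simp only [Finset.mem_sigma, mem_Icc, Nat.mem_divisorsAntidiagonal]
    have : 1 ≤ d * j := Nat.one_le_iff_ne_zero.mpr (by positivity)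
    exact ⟨⟨this, hle⟩, trivial, by omega⟩
  · rintro ⟨m, d, j⟩ hx
    simp only [Finset.mem_sigma, mem_Icc, Nat.mem_divisorsAntidiagonal] at hx
    obtain ⟨⟨hm1, hmn⟩, hdj, hm0⟩ := hx
    simp only [mem_filter, mem_product, mem_Icc]
    have hd0 : d ≠ 0 := by rintro rfl; simp at hdj; omega
    have hj0 : j ≠ 0 := by rintro rfl; simp at hdj; omega
    have hdm : d ≤ m := hdj ▸ Nat.le_mul_of_pos_right d (Nat.pos_of_ne_zero hj0)
    have hjm : j ≤ m := hdj ▸ Nat.le_mul_of_pos_left j (Nat.pos_of_ne_zero hd0)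
    exact ⟨⟨⟨Nat.pos_of_ne_zero hd0, le_trans hdm hmn⟩,
      Nat.pos_of_ne_zero hj0, le_trans hjm hmn⟩, by omega⟩
  · rintro ⟨d, j⟩ _; rfl
  · rintro ⟨m, d, j⟩ hx
    simp only [Finset.mem_sigma, mem_Icc, Nat.mem_divisorsAntidiagonal] at hx
    simp [hx.2.1]
  · rintro ⟨d, j⟩ _; rfl

lemma euler (n : ℕ) : n * p n = ∑ m ∈ Icc 1 n, (∑ e ∈ m.divisors, e) * p (n - m) := by
  have h1 : n * p n = ∑ lam : Nat.Partition n, ∑ d ∈ Icc 1 n, d * lam.parts.count d := by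
    rw [Finset.sum_congr rfl
      (fun lam _ => sum_mul_count n lam.parts (fun i hi => lam.parts_pos hi) lam.parts_sum)]
    simp [p, Finset.sum_const, mul_comm]
  rw [h1, Finset.sum_comm]
  have h2 : ∀ d ∈ Icc 1 n, (∑ lam : Nat.Partition n, d * lam.parts.count d)
      = ∑ j ∈ Icc 1 n, (if d * j ≤ n then d * p (n - d * j) else 0) := by
    intro d hd
    simp only [mem_Icc] at hd
    rw [← Finset.mul_sum, sum_count n d hd.1, Finset.mul_sum]
    refine Finset.sum_congr rfl fun j _ => ?_
    rw [mul_ite, mul_zero]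
  rw [Finset.sum_congr rfl h2, regroup n (fun d m => d * p (n - m))]
  refine Finset.sum_congr rfl fun m _ => ?_
  rw [Nat.sum_divisorsAntidiagonal (fun d e => d * p (n - m)), ← Finset.sum_mul]

lemma shift_fst (k n m : ℕ) (hk : 0 < k) (hm : m ≤ n) :
    ∑ ij ∈ (range (n + 1) ×ˢ range (n + 1)).filter
        (fun ij => ij.1 + k * ij.2 = n ∧ m ≤ ij.1), p (ij.1 - m) * p ij.2
      = pColor k (n - m) := by
  rw [pColor]
  refine Finset.sum_nbij' (i := fun ij => (ij.1 - m, ij.2)) (j := fun ij => (ij.1 + m, ij.2))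
    ?_ ?_ ?_ ?_ ?_
  · rintro ⟨i, j⟩ hq
    simp only [mem_filter, mem_product, mem_range] at hq ⊢
    obtain ⟨⟨hi, hj⟩, heq, hmi⟩ := hq
    have hjk : j ≤ k * j := Nat.le_mul_of_pos_left j hk
    refine ⟨⟨by omega, by omega⟩, by omega⟩
  · rintro ⟨i, j⟩ hq
    simp only [mem_filter, mem_product, mem_range] at hq ⊢
    obtain ⟨⟨hi, hj⟩, heq⟩ := hq
    refine ⟨⟨by omega, by omega⟩, by omega, by omega⟩
  · rintro ⟨i, j⟩ hq
    simp only [mem_filter, mem_product, mem_range] at hq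
    have : m ≤ i := hq.2.2
    simp [Prod.ext_iff]; omega
  · rintro ⟨i, j⟩ _; simp
  · rintro ⟨i, j⟩ _; rfl

lemma shift_snd (k n m : ℕ) (hk : 0 < k) (hm : k * m ≤ n) :
    ∑ ij ∈ (range (n + 1) ×ˢ range (n + 1)).filter
        (fun ij => ij.1 + k * ij.2 = n ∧ m ≤ ij.2), p ij.1 * p (ij.2 - m)
      = pColor k (n - k * m) := by
  rw [pColor]
  refine Finset.sum_nbij' (i := fun ij => (ij.1, ij.2 - m)) (j := fun ij => (ij.1, ij.2 + m))
    ?_ ?_ ?_ ?_ ?_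
  · rintro ⟨i, j⟩ hq
    simp only [mem_filter, mem_product, mem_range] at hq ⊢
    obtain ⟨⟨hi, hj⟩, heq, hmj⟩ := hq
    have h1 : k * (j - m) = k * j - k * m := Nat.mul_sub k j m
    have h2 : k * m ≤ k * j := Nat.mul_le_mul_left k hmj
    have h3 : j - m ≤ k * (j - m) := Nat.le_mul_of_pos_left _ hk
    refine ⟨⟨by omega, by omega⟩, by omega⟩
  · rintro ⟨i, j⟩ hq
    simp only [mem_filter, mem_product, mem_range] at hq ⊢
    obtain ⟨⟨hi, hj⟩, heq⟩ := hq
    have h1 : k * (j + m) = k * j + k * m := Nat.mul_add k j m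
    have h3 : j + m ≤ k * (j + m) := Nat.le_mul_of_pos_left _ hk
    refine ⟨⟨by omega, by omega⟩, by omega, by omega⟩
  · rintro ⟨i, j⟩ hq
    simp only [mem_filter, mem_product, mem_range] at hq
    have : m ≤ j := hq.2.2
    simp [Prod.ext_iff]; omega
  · rintro ⟨i, j⟩ _; simp
  · rintro ⟨i, j⟩ _; rfl

lemma sigF_mul (k m : ℕ) (hk : 0 < k) (hm : 0 < m) :
    ∑ d ∈ (k * m).divisors.filter (fun d => k ∣ d), d = k * ∑ e ∈ m.divisors, e := by
  rw [Finset.mul_sum]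
  refine Finset.sum_nbij' (i := fun d => d / k) (j := fun e => k * e) ?_ ?_ ?_ ?_ ?_
  · rintro d hd
    simp only [mem_filter, Nat.mem_divisors] at hd ⊢
    obtain ⟨⟨hdvd, hne⟩, hkd⟩ := hd
    obtain ⟨e, rfl⟩ := hkd
    rw [Nat.mul_div_cancel_left e hk]
    exact ⟨(mul_dvd_mul_iff_left (by omega : k ≠ 0)).mp hdvd, by omega⟩
  · rintro e he
    simp only [mem_filter, Nat.mem_divisors] at he ⊢
    exact ⟨⟨mul_dvd_mul_left k he.1, Nat.mul_ne_zero (by omega) he.2⟩, dvd_mul_right k e⟩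
  · rintro d hd
    simp only [mem_filter, Nat.mem_divisors] at hd
    obtain ⟨-, hkd⟩ := hd
    obtain ⟨e, rfl⟩ := hkd
    show k * (k * e / k) = k * e
    rw [Nat.mul_div_cancel_left e hk]
  · rintro e _
    exact Nat.mul_div_cancel_left e hk
  · rintro d hd
    simp only [mem_filter, Nat.mem_divisors] at hd
    obtain ⟨-, hkd⟩ := hd
    obtain ⟨e, rfl⟩ := hkd
    show k * e = k * (k * e / k)
    rw [Nat.mul_div_cancel_left e hk]

lemma sigF_zero (k m : ℕ) (hkm : ¬ k ∣ m) :
    ∑ d ∈ m.divisors.filter (fun d => k ∣ d), d = 0 := by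
  rw [Finset.sum_eq_zero]
  rintro d hd
  simp only [mem_filter, Nat.mem_divisors] at hd
  exact absurd (hd.2.trans hd.1.1) hkm

lemma second_sum (k n : ℕ) (hk : 0 < k) (P : ℕ → ℕ) :
    ∑ m ∈ Icc 1 n, (if k * m ≤ n then (k * ∑ e ∈ m.divisors, e) * P (n - k * m) else 0)
      = ∑ m ∈ Icc 1 n, (∑ d ∈ m.divisors.filter (fun d => k ∣ d), d) * P (n - m) := by
  rw [← Finset.sum_filter]
  rw [show (∑ m ∈ Icc 1 n, (∑ d ∈ m.divisors.filter (fun d => k ∣ d), d) * P (n - m))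
      = ∑ m ∈ (Icc 1 n).filter (fun m => k ∣ m),
          (∑ d ∈ m.divisors.filter (fun d => k ∣ d), d) * P (n - m) from
    (Finset.sum_filter_of_ne (fun m _ h => by
      by_contra hkm
      exact h (by rw [sigF_zero k m hkm, zero_mul]))).symm]
  refine Finset.sum_nbij' (i := fun m => k * m) (j := fun m => m / k) ?_ ?_ ?_ ?_ ?_
  · rintro m hm
    simp only [mem_filter, mem_Icc] at hm ⊢
    exact ⟨⟨Nat.mul_pos hk hm.1.1, hm.2⟩, dvd_mul_right k m⟩
  · rintro m hm
    simp only [mem_filter, mem_Icc] at hm ⊢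
    obtain ⟨⟨h1, h2⟩, hkd⟩ := hm
    obtain ⟨e, rfl⟩ := hkd
    rw [Nat.mul_div_cancel_left e hk]
    have hle : e ≤ k * e := Nat.le_mul_of_pos_left e hk
    have he0 : e ≠ 0 := by rintro rfl; simp at h1
    refine ⟨⟨by omega, by omega⟩, by omega⟩
  · rintro m _; exact Nat.mul_div_cancel_left m hk
  · rintro m hm
    simp only [mem_filter, mem_Icc] at hm
    show k * (m / k) = m
    exact Nat.mul_div_cancel' hm.2
  · rintro m hm
    simp only [mem_filter, mem_Icc] at hm
    rw [sigF_mul k m hk hm.1.1]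

lemma Icc_filter_le (n c : ℕ) (h : c ≤ n) :
    Icc 1 c = (Icc 1 n).filter (fun m => m ≤ c) := by
  ext m; simp only [mem_Icc, mem_filter]; omega

theorem pColor_recursion (k : ℕ) (hk : 0 < k) (n : ℕ) (hn : 0 < n) :
    n * pColor k n = ∑ m ∈ Icc 1 n, sigmaLabeled k m * pColor k (n - m) := by
  have step1 : n * pColor k n
      = (∑ ij ∈ (range (n + 1) ×ˢ range (n + 1)).filter (fun ij => ij.1 + k * ij.2 = n),
          (ij.1 * p ij.1) * p ij.2)
        + ∑ ij ∈ (range (n + 1) ×ˢ range (n + 1)).filter (fun ij => ij.1 + k * ij.2 = n),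
          k * (p ij.1 * (ij.2 * p ij.2)) := by
    rw [pColor, Finset.mul_sum, ← Finset.sum_add_distrib]
    refine Finset.sum_congr rfl fun ij hij => ?_
    have h := (mem_filter.mp hij).2
    rw [← h]; ring
  have term1 : (∑ ij ∈ (range (n + 1) ×ˢ range (n + 1)).filter
        (fun ij => ij.1 + k * ij.2 = n), (ij.1 * p ij.1) * p ij.2)
      = ∑ m ∈ Icc 1 n, (∑ e ∈ m.divisors, e) * pColor k (n - m) := by
    have e1 : ∀ ij ∈ (range (n + 1) ×ˢ range (n + 1)).filter
        (fun ij => ij.1 + k * ij.2 = n), (ij.1 * p ij.1) * p ij.2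
        = ∑ m ∈ Icc 1 n,
            (if m ≤ ij.1 then ((∑ e ∈ m.divisors, e) * p (ij.1 - m)) * p ij.2 else 0) := by
      intro ij hij
      simp only [mem_filter, mem_product, mem_range] at hij
      rw [euler ij.1, Finset.sum_mul, Icc_filter_le n ij.1 (by omega), Finset.sum_filter]
    rw [Finset.sum_congr rfl e1, Finset.sum_comm]
    refine Finset.sum_congr rfl fun m hm => ?_
    rw [← Finset.sum_filter, Finset.filter_filter]
    rw [show (∑ ij ∈ (range (n + 1) ×ˢ range (n + 1)).filter
          (fun ij => ij.1 + k * ij.2 = n ∧ m ≤ ij.1),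
        ((∑ e ∈ m.divisors, e) * p (ij.1 - m)) * p ij.2)
        = (∑ e ∈ m.divisors, e) * ∑ ij ∈ (range (n + 1) ×ˢ range (n + 1)).filter
          (fun ij => ij.1 + k * ij.2 = n ∧ m ≤ ij.1), p (ij.1 - m) * p ij.2 from by
      rw [Finset.mul_sum]; exact Finset.sum_congr rfl fun ij _ => by ring]
    rw [shift_fst k n m hk (mem_Icc.mp hm).2]
  have term2 : (∑ ij ∈ (range (n + 1) ×ˢ range (n + 1)).filter
        (fun ij => ij.1 + k * ij.2 = n), k * (p ij.1 * (ij.2 * p ij.2)))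
      = ∑ m ∈ Icc 1 n, (∑ d ∈ m.divisors.filter (fun d => k ∣ d), d) * pColor k (n - m) := by
    have e1 : ∀ ij ∈ (range (n + 1) ×ˢ range (n + 1)).filter
        (fun ij => ij.1 + k * ij.2 = n), k * (p ij.1 * (ij.2 * p ij.2))
        = ∑ m ∈ Icc 1 n,
            (if m ≤ ij.2 then (k * ∑ e ∈ m.divisors, e) * (p ij.1 * p (ij.2 - m)) else 0) := by
      intro ij hij
      simp only [mem_filter, mem_product, mem_range] at hij
      have hj : ij.2 ≤ n := by
        have : ij.2 ≤ k * ij.2 := Nat.le_mul_of_pos_left _ hk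
        omega
      rw [euler ij.2, Finset.mul_sum, Finset.mul_sum, Icc_filter_le n ij.2 hj,
        Finset.sum_filter]
      refine Finset.sum_congr rfl fun m _ => ?_
      split_ifs
      · ring
      · ring
    rw [Finset.sum_congr rfl e1, Finset.sum_comm, ← second_sum k n hk (pColor k)]
    refine Finset.sum_congr rfl fun m hm => ?_
    rw [← Finset.sum_filter, Finset.filter_filter]
    rw [(Finset.mul_sum ((range (n + 1) ×ˢ range (n + 1)).filter
          (fun ij => ij.1 + k * ij.2 = n ∧ m ≤ ij.2))
        (fun ij => p ij.1 * p (ij.2 - m)) (k * ∑ e ∈ m.divisors, e)).symm]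
    by_cases hkm : k * m ≤ n
    · rw [if_pos hkm, shift_snd k n m hk hkm]
    · rw [if_neg hkm]
      have : ((range (n + 1) ×ˢ range (n + 1)).filter
          (fun ij => ij.1 + k * ij.2 = n ∧ m ≤ ij.2)) = ∅ := by
        rw [Finset.filter_eq_empty_iff]
        rintro ⟨i, j⟩ _
        rintro ⟨heq, hmj⟩
        have h1 : k * m ≤ k * j := Nat.mul_le_mul_left k hmj
        have h2 : i + k * j = n := heq
        omega
      rw [this, Finset.sum_empty, mul_zero]
  rw [step1, term1, term2, ← Finset.sum_add_distrib]
  refine Finset.sum_congr rfl fun m _ => ?_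
  rw [sigmaLabeled, add_mul]
end

section
/- For every nonnegative integer n, p_2(n) = \sum s(m^2) p(i) p(j) p(k), where the sum is over all quadruples of nonnegative integers (m, i, j, k) with m^2 + i + j + k = n, and where s(0) = 1 and s(m^2) = 2(-1)^m for m \ge 1. -/
open Finset

/-- `p₂ n` is the number of cubic partitions of `n`:
`p₂ n = ∑_{i + 2j = n, i, j ≥ 0} p i * p j`. -/
def p₂ (n : ℕ) : ℕ :=
  ∑ ij ∈ (range (n + 1) ×ˢ range (n + 1)).filter (fun ij => ij.1 + 2 * ij.2 = n),
    p ij.1 * p ij.2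

/-- `s m` encodes the value `s(m²)`: `s(0) = 1` and `s(m²) = 2 * (-1)^m` for `m ≥ 1`. -/
def s (m : ℕ) : ℤ := if m = 0 then 1 else 2 * (-1) ^ m

namespace CubicAux
noncomputable section
open PowerSeries

abbrev R := PowerSeries ℚ

/-- Congruence mod `X^(n+1)`. -/
def MD (n : ℕ) (f g : R) : Prop := (X : R) ^ (n + 1) ∣ (f - g)

lemma MD.rfl {n : ℕ} {f : R} : MD n f f := by simp [MD]

lemma MD.symm {n : ℕ} {f g : R} (h : MD n f g) : MD n g f := by
  simpa [MD, neg_sub] using (dvd_neg.2 h)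

lemma MD.trans {n : ℕ} {f g h : R} (h1 : MD n f g) (h2 : MD n g h) : MD n f h := by
  have := dvd_add h1 h2
  simpa [MD, sub_add_sub_cancel] using this

lemma MD.mul {n : ℕ} {f g f' g' : R} (h : MD n f g) (h' : MD n f' g') :
    MD n (f * f') (g * g') := by
  have : f * f' - g * g' = f * (f' - g') + (f - g) * g' := by ring
  rw [MD, this]
  exact dvd_add (Dvd.dvd.mul_left h' f) (Dvd.dvd.mul_right h g')

lemma MD.coeff_eq {n : ℕ} {f g : R} (h : MD n f g) {k : ℕ} (hk : k ≤ n) :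
    coeff k f = coeff k g := by
  rw [MD, PowerSeries.X_pow_dvd_iff] at h
  have := h k (by omega)
  rw [map_sub, sub_eq_zero] at this
  exact this

lemma MD.of_coeff {n : ℕ} {f g : R} (h : ∀ k ≤ n, coeff k f = coeff k g) : MD n f g := by
  rw [MD, PowerSeries.X_pow_dvd_iff]
  intro m hm
  rw [map_sub, sub_eq_zero]
  exact h m (by omega)

lemma MD.mono {m n : ℕ} {f g : R} (hmn : m ≤ n) (h : MD n f g) : MD m f g :=
  MD.of_coeff fun k hk => h.coeff_eq (le_trans hk hmn)

lemma MD.sum {n : ℕ} {ι : Type*} {t : Finset ι} {f g : ι → R}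
    (h : ∀ i ∈ t, MD n (f i) (g i)) : MD n (∑ i ∈ t, f i) (∑ i ∈ t, g i) := by
  rw [MD, ← Finset.sum_sub_distrib]
  exact Finset.dvd_sum h

lemma MD_X_pow_mul {n m : ℕ} (h : n + 1 ≤ m) (f : R) : MD n ((X : R) ^ m * f) 0 := by
  rw [MD, sub_zero]
  exact Dvd.dvd.mul_right (pow_dvd_pow _ h) f

/-- products of `1 - X^k` -/
def Fa (N : ℕ) : R := ∏ i ∈ range N, (1 - X ^ (i + 1))
def Fo (N : ℕ) : R := ∏ i ∈ range N, (1 - X ^ (2 * i + 1))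
def Fe (N : ℕ) : R := ∏ i ∈ range N, (1 - X ^ (2 * i + 2))

lemma constCoeff_one_sub_X_pow (k : ℕ) (hk : 0 < k) :
    constantCoeff (1 - X ^ k : R) = 1 := by
  rw [map_sub, map_one, map_pow, constantCoeff_X, zero_pow (by omega), sub_zero]

lemma constCoeff_Fa (N : ℕ) : constantCoeff (Fa N) = 1 := by
  rw [Fa, map_prod]
  exact Finset.prod_eq_one fun i _ => constCoeff_one_sub_X_pow _ (by omega)

lemma constCoeff_Fo (N : ℕ) : constantCoeff (Fo N) = 1 := by
  rw [Fo, map_prod]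
  exact Finset.prod_eq_one fun i _ => constCoeff_one_sub_X_pow _ (by omega)

lemma constCoeff_Fe (N : ℕ) : constantCoeff (Fe N) = 1 := by
  rw [Fe, map_prod]
  exact Finset.prod_eq_one fun i _ => constCoeff_one_sub_X_pow _ (by omega)

lemma Fa_mul_inv (N : ℕ) : Fa N * (Fa N)⁻¹ = 1 :=
  PowerSeries.mul_inv_cancel _ (by rw [constCoeff_Fa]; norm_num)

lemma Fe_mul_inv (N : ℕ) : Fe N * (Fe N)⁻¹ = 1 :=
  PowerSeries.mul_inv_cancel _ (by rw [constCoeff_Fe]; norm_num)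

lemma MD.inv {n : ℕ} {f g : R} (h : MD n f g) (hf : constantCoeff f ≠ 0)
    (hg : constantCoeff g ≠ 0) : MD n f⁻¹ g⁻¹ := by
  have key : f⁻¹ - g⁻¹ = f⁻¹ * (g - f) * g⁻¹ := by
    have h1 : f * f⁻¹ = 1 := PowerSeries.mul_inv_cancel _ hf
    have h2 : g * g⁻¹ = 1 := PowerSeries.mul_inv_cancel _ hg
    calc f⁻¹ - g⁻¹ = f⁻¹ * (g * g⁻¹) - (f * f⁻¹) * g⁻¹ := by rw [h1, h2]; ring
    _ = f⁻¹ * (g - f) * g⁻¹ := by ring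
  rw [MD, key]
  have h3 : (X : R) ^ (n + 1) ∣ g - f := by
    rw [← neg_sub f g]; exact dvd_neg.mpr h
  exact (h3.mul_left _).mul_right _

/-- A product of factors each ≡ 1 is ≡ 1. -/
lemma MD_prod_one {n : ℕ} {ι : Type*} {t : Finset ι} {f : ι → R}
    (h : ∀ i ∈ t, MD n (f i) 1) : MD n (∏ i ∈ t, f i) 1 := by
  classical
  induction t using Finset.induction_on with
  | empty => simp [MD.rfl]
  | @insert a t' hx ih =>
    rw [Finset.prod_insert hx]
    have h1 : MD n (f a) 1 := h a (mem_insert_self _ _)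
    have h2 : MD n (∏ i ∈ t', f i) 1 := ih fun i hi => h i (mem_insert_of_mem hi)
    simpa using h1.mul h2

lemma MD_one_sub_X_pow_one {n k : ℕ} (h : n + 1 ≤ k) : MD n (1 - X ^ k) 1 := by
  rw [MD, sub_sub_cancel_left]
  exact (pow_dvd_pow _ h).neg_right

-- continuation fragment: assumes m1 context
lemma Fa_two_mul (N : ℕ) : Fa (2 * N) = Fo N * Fe N := by
  induction N with
  | zero => simp [Fa, Fo, Fe]
  | succ n ih =>
    have h2 : 2 * (n + 1) = (2 * n + 1) + 1 := by ring
    simp only [Fa, Fo, Fe] at ih ⊢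
    rw [h2, Finset.prod_range_succ, Finset.prod_range_succ, ih,
      Finset.prod_range_succ, Finset.prod_range_succ,
      show 2 * n + 1 + 1 = 2 * n + 2 by ring]
    ring

lemma Fe_congr {n T t : ℕ} (hT : n + 1 ≤ 2 * T + 2) (h : T ≤ t) : MD n (Fe t) (Fe T) := by
  have key : Fe t = Fe T * ∏ i ∈ Ico T t, (1 - (X : R) ^ (2 * i + 2)) := by
    rw [Fe, Fe, Finset.prod_range_mul_prod_Ico _ h]
  rw [key]
  have h2 : MD n (∏ i ∈ Ico T t, (1 - (X : R) ^ (2 * i + 2))) 1 :=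
    MD_prod_one fun i hi => MD_one_sub_X_pow_one
      (by have := (Finset.mem_Ico.1 hi).1; omega)
  simpa using (MD.rfl (f := Fe T)).mul h2

/-- Gaussian binomial (in `q = X²`), `gb2 m r = C(m, r)_{X²}`, zero outside `0 ≤ r ≤ m`. -/
def gb2 : ℕ → ℤ → R
  | 0, r => if r = 0 then 1 else 0
  | (m + 1), r => gb2 m r + X ^ (2 * ((m : ℤ) + 1 - r)).toNat * gb2 m (r - 1)

lemma gb2_zero (r : ℤ) : gb2 0 r = if r = 0 then 1 else 0 := rfl

lemma gb2_succ (m : ℕ) (r : ℤ) :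
    gb2 (m + 1) r = gb2 m r + X ^ (2 * ((m : ℤ) + 1 - r)).toNat * gb2 m (r - 1) := rfl

lemma gb2_neg : ∀ (m : ℕ) (r : ℤ), r < 0 → gb2 m r = 0 := by
  intro m
  induction m with
  | zero => intro r hr; rw [gb2_zero, if_neg (by omega)]
  | succ m ih =>
    intro r hr
    rw [gb2_succ, ih r hr, ih (r - 1) (by omega), mul_zero, add_zero]

lemma gb2_gt : ∀ (m : ℕ) (r : ℤ), (m : ℤ) < r → gb2 m r = 0 := by
  intro m
  induction m with
  | zero => intro r hr; rw [gb2_zero, if_neg (by omega)]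
  | succ m ih =>
    intro r hr
    rw [gb2_succ, ih r (by push_cast; omega), ih (r - 1) (by push_cast; omega),
      mul_zero, add_zero]

lemma gb2_pascal1 : ∀ (m : ℕ) (r : ℤ),
    gb2 (m + 1) r = gb2 m (r - 1) + X ^ (2 * r).toNat * gb2 m r := by
  intro m
  induction m with
  | zero =>
    intro r
    rcases eq_or_ne r 0 with rfl | h0
    · norm_num [gb2_succ, gb2_zero, gb2_neg 0 (-1) (by omega)]
    rcases eq_or_ne r 1 with rfl | h1
    · norm_num [gb2_succ, gb2_zero]
    · simp [gb2_succ, gb2_zero, h0, show r - 1 ≠ 0 by omega]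
  | succ m ih =>
    intro r
    have e1 : X ^ (2 * ((m : ℤ) + 2 - r)).toNat * (X ^ (2 * (r - 1)).toNat * gb2 m (r - 1))
        = X ^ (2 * r).toNat * (X ^ (2 * ((m : ℤ) + 1 - r)).toNat * gb2 m (r - 1)) := by
      rcases le_or_gt r 0 with h | h
      · rw [gb2_neg m (r - 1) (by omega)]; ring
      rcases le_or_gt r ((m : ℤ) + 1) with h2 | h2
      · rw [← mul_assoc, ← mul_assoc, ← pow_add, ← pow_add]
        congr 2
        omega
      · rw [gb2_gt m (r - 1) (by omega)]; ring
    have hL : gb2 (m + 1 + 1) r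
        = (gb2 m (r - 1) + X ^ (2 * r).toNat * gb2 m r)
          + X ^ (2 * ((m : ℤ) + 2 - r)).toNat *
            (gb2 m (r - 1 - 1) + X ^ (2 * (r - 1)).toNat * gb2 m (r - 1)) := by
      rw [gb2_succ (m + 1) r, ih r, ih (r - 1),
        show ((↑(m + 1) : ℤ) + 1 - r) = ((m : ℤ) + 2 - r) by push_cast; ring]
    have hR : gb2 (m + 1) (r - 1) + X ^ (2 * r).toNat * gb2 (m + 1) r
        = (gb2 m (r - 1) + X ^ (2 * ((m : ℤ) + 2 - r)).toNat * gb2 m (r - 1 - 1))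
          + X ^ (2 * r).toNat *
            (gb2 m r + X ^ (2 * ((m : ℤ) + 1 - r)).toNat * gb2 m (r - 1)) := by
      rw [gb2_succ m (r - 1), gb2_succ m r,
        show ((m : ℤ) + 1 - (r - 1)) = ((m : ℤ) + 2 - r) by ring]
    rw [hL, hR]
    linear_combination e1
lemma gb2_denom : ∀ (m a : ℕ), a ≤ m → gb2 m a * (Fe a * Fe (m - a)) = Fe m := by
  intro m
  induction m with
  | zero =>
    intro a ha
    interval_cases a
    simp [gb2_zero, Fe]
  | succ m ih =>
    intro a ha
    have hFe : Fe (m + 1) = Fe m * (1 - X ^ (2 * m + 2)) := by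
      rw [Fe, Finset.prod_range_succ, ← Fe]
    rcases eq_or_lt_of_le ha with rfl | ham
    · -- a = m + 1
      have hc : ((m + 1 : ℕ) : ℤ) = (m : ℤ) + 1 := by push_cast; ring
      rw [hc, Nat.sub_self, gb2_succ m ((m : ℤ) + 1), gb2_gt m ((m : ℤ) + 1) (by omega),
        zero_add, show (2 * ((m : ℤ) + 1 - ((m : ℤ) + 1))).toNat = 0 by omega, pow_zero,
        one_mul, show ((m : ℤ) + 1 - 1) = (m : ℤ) by ring]
      have hmm := ih m le_rfl
      rw [Nat.sub_self] at hmm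
      calc gb2 m (m : ℤ) * (Fe (m + 1) * Fe 0)
          = gb2 m (m : ℤ) * (Fe m * Fe 0) * (1 - X ^ (2 * m + 2)) := by rw [hFe]; ring
        _ = Fe m * (1 - X ^ (2 * m + 2)) := by rw [hmm]
        _ = Fe (m + 1) := hFe.symm
    · -- a ≤ m
      have ham' : a ≤ m := by omega
      rw [gb2_succ m (a : ℤ)]
      have hsub : m + 1 - a = (m - a) + 1 := by omega
      have hFe2 : Fe (m + 1 - a) = Fe (m - a) * (1 - X ^ (2 * (m - a) + 2)) := by
        rw [hsub, Fe, Finset.prod_range_succ, ← Fe]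
      have key1 : gb2 m (a : ℤ) * (Fe a * Fe (m + 1 - a))
          = Fe m * (1 - X ^ (2 * (m - a) + 2)) := by
        rw [hFe2, ← mul_assoc, ← ih a ham']
        ring
      rcases Nat.eq_zero_or_pos a with rfl | hapos
      · -- a = 0 : second term vanishes
        rw [show ((0:ℕ) : ℤ) - 1 = (-1 : ℤ) by ring, gb2_neg m (-1) (by omega), mul_zero,
          add_zero]
        rw [key1, hFe]
        norm_num
      · -- 1 ≤ a ≤ m
        have hFe3 : Fe a = Fe (a - 1) * (1 - X ^ (2 * (a - 1) + 2)) := by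
          rw [show a = (a - 1) + 1 by omega, Fe, Finset.prod_range_succ, ← Fe]
          congr 2 <;> omega
        have key2 : gb2 m ((a : ℤ) - 1) * (Fe a * Fe (m + 1 - a))
            = Fe m * (1 - X ^ (2 * a)) := by
          have hih := ih (a - 1) (by omega)
          have hcast : ((a - 1 : ℕ) : ℤ) = (a : ℤ) - 1 := by omega
          rw [hcast] at hih
          have hmm : m - (a - 1) = m + 1 - a := by omega
          rw [hmm] at hih
          rw [hFe3, show 2 * (a - 1) + 2 = 2 * a by omega]
          calc gb2 m ((a:ℤ) - 1) * (Fe (a - 1) * (1 - X ^ (2 * a)) * Fe (m + 1 - a))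
              = gb2 m ((a:ℤ) - 1) * (Fe (a - 1) * Fe (m + 1 - a)) * (1 - X ^ (2 * a)) := by ring
            _ = Fe m * (1 - X ^ (2 * a)) := by rw [hih]
        have hexp : (2 * ((m : ℤ) + 1 - (a : ℤ))).toNat = 2 * (m - a) + 2 := by omega
        rw [add_mul, key1, mul_assoc, key2, hexp, hFe]
        have hxp : (X : R) ^ (2 * (m - a) + 2) * X ^ (2 * a) = X ^ (2 * m + 2) := by
          rw [← pow_add]
          congr 1
          omega
        linear_combination (-(Fe m)) * hxp
/-- centered exponent -/
def dd (N j : ℕ) : ℕ := ((j : ℤ) - N).natAbs ^ 2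

lemma natAbs_sq_cast (x : ℤ) : ((x.natAbs ^ 2 : ℕ) : ℤ) = x ^ 2 := by
  push_cast
  exact sq_abs x

lemma dd1 (N i : ℕ) (h : i ≤ 2 * N) :
    dd N (i + 1) + (2 * ((↑(2 * N) : ℤ) + 1 - (↑(i + 1) : ℤ))).toNat = dd N i + (2 * N + 1) := by
  have e1 : (dd N (i + 1) : ℤ) = ((i : ℤ) + 1 - N) ^ 2 := by
    rw [dd, natAbs_sq_cast]
    push_cast
    ring
  have e2 : (dd N i : ℤ) = ((i : ℤ) - N) ^ 2 := by
    rw [dd, natAbs_sq_cast]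
  have key : (dd N (i + 1) : ℤ) + 2 * ((↑(2 * N) : ℤ) + 1 - (↑(i + 1) : ℤ))
      = (dd N i : ℤ) + (2 * N + 1) := by
    rw [e1, e2]
    push_cast
    ring
  omega

lemma dd2 (N i : ℕ) : dd (N + 1) (i + 1) = dd N i := by
  rw [dd, dd]
  congr 1
  congr 1
  push_cast
  ring

lemma dd3 (N j : ℕ) : dd (N + 1) j + (2 * (j : ℤ)).toNat = dd N j + (2 * N + 1) := by
  have e1 : (dd (N + 1) j : ℤ) = ((j : ℤ) - N - 1) ^ 2 := by
    rw [dd, natAbs_sq_cast]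
    push_cast
    ring
  have e2 : (dd N j : ℤ) = ((j : ℤ) - N) ^ 2 := by
    rw [dd, natAbs_sq_cast]
  have key : (dd (N + 1) j : ℤ) + 2 * (j : ℤ) = (dd N j : ℤ) + (2 * N + 1) := by
    rw [e1, e2]; ring
  omega

def Vsum (N : ℕ) : R :=
  ∑ j ∈ range (2 * N + 1), (-1 : R) ^ (N + j) * X ^ dd N j * gb2 (2 * N) j

def Asum (N : ℕ) : R :=
  ∑ j ∈ range (2 * N + 2), (-1 : R) ^ (N + j) * X ^ dd N j * gb2 (2 * N + 1) j

lemma step1 (N : ℕ) : Asum N = (1 - X ^ (2 * N + 1)) * Vsum N := by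
  have expand : ∀ j : ℕ, (-1 : R) ^ (N + j) * X ^ dd N j * gb2 (2 * N + 1) j
      = (-1 : R) ^ (N + j) * X ^ dd N j * gb2 (2 * N) j
        + (-1 : R) ^ (N + j) * (X ^ dd N j *
            X ^ (2 * ((↑(2 * N) : ℤ) + 1 - (j : ℤ))).toNat * gb2 (2 * N) ((j : ℤ) - 1)) := by
    intro j
    rw [gb2_succ (2 * N) j]
    ring
  rw [Asum, Finset.sum_congr rfl fun j _ => expand j, Finset.sum_add_distrib]
  have hS1 : ∑ j ∈ range (2 * N + 1 + 1),
      (-1 : R) ^ (N + j) * X ^ dd N j * gb2 (2 * N) j = Vsum N := by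
    rw [Finset.sum_range_succ, gb2_gt (2 * N) ((2 * N + 1 : ℕ) : ℤ) (by push_cast; omega),
      mul_zero, add_zero, Vsum]
  have hS2 : ∑ j ∈ range (2 * N + 1 + 1), (-1 : R) ^ (N + j) * (X ^ dd N j *
      X ^ (2 * ((↑(2 * N) : ℤ) + 1 - (j : ℤ))).toNat * gb2 (2 * N) ((j : ℤ) - 1))
      = -(X ^ (2 * N + 1) * Vsum N) := by
    rw [Finset.sum_range_succ']
    have h0 : (-1 : R) ^ (N + 0) * (X ^ dd N 0 *
        X ^ (2 * ((↑(2 * N) : ℤ) + 1 - ((0 : ℕ) : ℤ))).toNat * gb2 (2 * N) (((0 : ℕ) : ℤ) - 1))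
        = 0 := by
      rw [gb2_neg (2 * N) _ (by simp), mul_zero, mul_zero]
    rw [h0, add_zero]
    rw [show -(X ^ (2 * N + 1) * Vsum N)
        = ∑ i ∈ range (2 * N + 1), -((X : R) ^ (2 * N + 1) *
            ((-1 : R) ^ (N + i) * X ^ dd N i * gb2 (2 * N) i)) by
      rw [Vsum, Finset.mul_sum, ← Finset.sum_neg_distrib]]
    refine Finset.sum_congr rfl fun i hi => ?_
    have hi' : i ≤ 2 * N := by have := Finset.mem_range.1 hi; omega
    have hcast : ((i + 1 : ℕ) : ℤ) - 1 = (i : ℤ) := by push_cast; ring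
    rw [hcast]
    have hexp := dd1 N i hi'
    have hpow : (X : R) ^ dd N (i + 1) * X ^ (2 * ((↑(2 * N) : ℤ) + 1 - (↑(i + 1) : ℤ))).toNat
        = X ^ dd N i * X ^ (2 * N + 1) := by
      rw [← pow_add, ← pow_add, hexp]
    have hsign : (-1 : R) ^ (N + (i + 1)) = -(-1 : R) ^ (N + i) := by
      rw [show N + (i + 1) = (N + i) + 1 by ring, pow_succ]
      ring
    rw [hsign, hpow]
    ring
  rw [hS1, hS2]
  ring

lemma step2 (N : ℕ) : Vsum (N + 1) = (1 - X ^ (2 * N + 1)) * Asum N := by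
  have hr : 2 * (N + 1) = 2 * N + 1 + 1 := by ring
  rw [Vsum, hr]
  have expand : ∀ j : ℕ, (-1 : R) ^ (N + 1 + j) * X ^ dd (N + 1) j * gb2 (2 * N + 1 + 1) j
      = (-1 : R) ^ (N + 1 + j) * X ^ dd (N + 1) j * gb2 (2 * N + 1) ((j : ℤ) - 1)
        + (-1 : R) ^ (N + 1 + j) * (X ^ dd (N + 1) j *
            X ^ (2 * (j : ℤ)).toNat * gb2 (2 * N + 1) j) := by
    intro j
    rw [gb2_pascal1 (2 * N + 1) j]
    ring
  rw [Finset.sum_congr rfl fun j _ => expand j, Finset.sum_add_distrib]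
  have hT1 : ∑ j ∈ range (2 * N + 1 + 1 + 1),
      (-1 : R) ^ (N + 1 + j) * X ^ dd (N + 1) j * gb2 (2 * N + 1) ((j : ℤ) - 1) = Asum N := by
    rw [Finset.sum_range_succ']
    have h0 : (-1 : R) ^ (N + 1 + 0) * X ^ dd (N + 1) 0 * gb2 (2 * N + 1) (((0 : ℕ) : ℤ) - 1)
        = 0 := by
      rw [gb2_neg (2 * N + 1) _ (by simp), mul_zero]
    rw [h0, add_zero, Asum]
    refine Finset.sum_congr rfl fun i _ => ?_
    have hcast : ((i + 1 : ℕ) : ℤ) - 1 = (i : ℤ) := by push_cast; ring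
    have hsign : (-1 : R) ^ (N + 1 + (i + 1)) = (-1 : R) ^ (N + i) := by
      rw [show N + 1 + (i + 1) = (N + i) + 2 by ring, pow_add]
      ring
    rw [hcast, hsign, dd2]
  have hT2 : ∑ j ∈ range (2 * N + 1 + 1 + 1), (-1 : R) ^ (N + 1 + j) * (X ^ dd (N + 1) j *
      X ^ (2 * (j : ℤ)).toNat * gb2 (2 * N + 1) j) = -(X ^ (2 * N + 1) * Asum N) := by
    rw [Finset.sum_range_succ]
    have hlast : gb2 (2 * N + 1) ((2 * N + 1 + 1 : ℕ) : ℤ) = 0 :=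
      gb2_gt _ _ (by push_cast; omega)
    rw [hlast, mul_zero, mul_zero, add_zero]
    rw [show -(X ^ (2 * N + 1) * Asum N)
        = ∑ j ∈ range (2 * N + 2), -((X : R) ^ (2 * N + 1) *
            ((-1 : R) ^ (N + j) * X ^ dd N j * gb2 (2 * N + 1) j)) by
      rw [Asum, Finset.mul_sum, ← Finset.sum_neg_distrib]]
    refine Finset.sum_congr rfl fun j _ => ?_
    have hexp := dd3 N j
    have hpow : (X : R) ^ dd (N + 1) j * X ^ (2 * (j : ℤ)).toNat
        = X ^ dd N j * X ^ (2 * N + 1) := by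
      rw [← pow_add, ← pow_add, hexp]
    have hsign : (-1 : R) ^ (N + 1 + j) = -(-1 : R) ^ (N + j) := by
      rw [show N + 1 + j = (N + j) + 1 by ring, pow_succ]
      ring
    rw [hsign, hpow]
    ring
  rw [hT1, hT2]
  ring

lemma gauss_finite : ∀ N : ℕ, Vsum N = Fo N ^ 2 := by
  intro N
  induction N with
  | zero => simp [Vsum, Fo, dd, gb2_zero]
  | succ N ih =>
    rw [step2, step1, ih,
      show Fo (N + 1) = Fo N * (1 - X ^ (2 * N + 1)) from by
        rw [Fo, Finset.prod_range_succ, ← Fo]]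
    ring
lemma MD.add {n : ℕ} {f g f' g' : R} (h : MD n f g) (h' : MD n f' g') :
    MD n (f + f') (g + g') := by
  have := dvd_add h h'
  simpa [MD, add_sub_add_comm] using this

lemma constCoeff_Fe_ne (N : ℕ) : constantCoeff (Fe N) ≠ 0 := by
  rw [constCoeff_Fe]; norm_num

lemma neg_one_pow_eq_of_even_add {a b : ℕ} (h : Even (a + b)) : (-1 : R) ^ a = (-1 : R) ^ b := by
  rcases Nat.even_or_odd a with ha | ha
  · have hb : Even b := by
      rcases Nat.even_add.1 h with h'
      exact h'.1 ha
    rw [ha.neg_one_pow, hb.neg_one_pow]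
  · have hb : Odd b := by
      rcases Nat.even_or_odd b with hb | hb
      · exact absurd ((Nat.even_add.1 h).2 hb) (Nat.not_even_iff_odd.2 ha)
      · exact hb
    rw [ha.neg_one_pow, hb.neg_one_pow]

lemma gb2_trunc (n N a : ℕ) (ha : a ≤ 2 * N) (h1 : n + 1 ≤ 2 * a + 2)
    (h2 : n + 1 ≤ 2 * (2 * N - a) + 2) (h3 : n + 1 ≤ 2 * N + 2) :
    MD n (gb2 (2 * N) a) ((Fe N)⁻¹) := by
  set T := min (min a (2 * N - a)) N with hT
  have hTa : T ≤ a := le_trans (min_le_left _ _) (min_le_left _ _)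
  have hTb : T ≤ 2 * N - a := le_trans (min_le_left _ _) (min_le_right _ _)
  have hTN : T ≤ N := min_le_right _ _
  have hT2 : n + 1 ≤ 2 * T + 2 := by omega
  have hMa : MD n (Fe a) (Fe T) := Fe_congr hT2 hTa
  have hMb : MD n (Fe (2 * N - a)) (Fe T) := Fe_congr hT2 hTb
  have hMN : MD n (Fe N) (Fe T) := Fe_congr hT2 hTN
  have hM2N : MD n (Fe (2 * N)) (Fe T) := Fe_congr hT2 (by omega)
  have hgb : gb2 (2 * N) a = Fe (2 * N) * ((Fe a)⁻¹ * (Fe (2 * N - a))⁻¹) := by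
    have hd := gb2_denom (2 * N) a ha
    calc gb2 (2 * N) a
        = gb2 (2 * N) a * ((Fe a * (Fe a)⁻¹) * (Fe (2 * N - a) * (Fe (2 * N - a))⁻¹)) := by
          rw [Fe_mul_inv, Fe_mul_inv]; ring
      _ = (gb2 (2 * N) a * (Fe a * Fe (2 * N - a))) * ((Fe a)⁻¹ * (Fe (2 * N - a))⁻¹) := by
          ring
      _ = Fe (2 * N) * ((Fe a)⁻¹ * (Fe (2 * N - a))⁻¹) := by rw [hd]
  rw [hgb]
  have step : MD n (Fe (2 * N) * ((Fe a)⁻¹ * (Fe (2 * N - a))⁻¹))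
      (Fe T * ((Fe T)⁻¹ * (Fe T)⁻¹)) :=
    hM2N.mul ((hMa.inv (constCoeff_Fe_ne a) (constCoeff_Fe_ne T)).mul
      (hMb.inv (constCoeff_Fe_ne _) (constCoeff_Fe_ne T)))
  have heq : Fe T * ((Fe T)⁻¹ * (Fe T)⁻¹) = (Fe T)⁻¹ := by
    rw [← mul_assoc, Fe_mul_inv, one_mul]
  rw [heq] at step
  exact step.trans ((hMN.inv (constCoeff_Fe_ne N) (constCoeff_Fe_ne T)).symm)

/-- Theta series: coefficient of `X^c` is `s (√c)` if `c` is a square, else `0`. -/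
def Th : R := PowerSeries.mk fun c => if Nat.sqrt c ^ 2 = c then ((s (Nat.sqrt c) : ℚ)) else 0

def Wsum (N : ℕ) : R :=
  ∑ m ∈ range (N + 1), (-1 : R) ^ m * X ^ (m ^ 2)
    + ∑ m ∈ range N, (-1 : R) ^ (m + 1) * X ^ ((m + 1) ^ 2)

lemma dd_left (N m : ℕ) (h : m ≤ N) : dd N (N - m) = m ^ 2 := by
  have key : (dd N (N - m) : ℤ) = ((m : ℤ)) ^ 2 := by
    rw [dd, natAbs_sq_cast, Nat.cast_sub h]
    ring
  exact_mod_cast key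

lemma dd_right (N m : ℕ) : dd N (N + 1 + m) = (m + 1) ^ 2 := by
  have key : (dd N (N + 1 + m) : ℤ) = ((m : ℤ) + 1) ^ 2 := by
    rw [dd, natAbs_sq_cast]
    push_cast
    ring
  exact_mod_cast key

lemma Vsum_trunc (n : ℕ) : MD n (Vsum (n + 1)) (Wsum (n + 1) * (Fe (n + 1))⁻¹) := by
  set N := n + 1 with hN
  have hsplit : Vsum N = (∑ j ∈ range (N + 1),
        (-1 : R) ^ (N + j) * X ^ dd N j * gb2 (2 * N) j)
      + ∑ i ∈ range N, (-1 : R) ^ (N + (N + 1 + i)) * X ^ dd N (N + 1 + i)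
          * gb2 (2 * N) ((N + 1 + i : ℕ)) := by
    rw [Vsum, show 2 * N + 1 = (N + 1) + N by ring, Finset.sum_range_add]
  have hrefl : (∑ j ∈ range (N + 1), (-1 : R) ^ (N + j) * X ^ dd N j * gb2 (2 * N) j)
      = ∑ m ∈ range (N + 1),
          (-1 : R) ^ (N + (N - m)) * X ^ dd N (N - m) * gb2 (2 * N) (((N - m : ℕ) : ℤ)) := by
    rw [← Finset.sum_range_reflect]
    simp only [show ∀ m, N + 1 - 1 - m = N - m from fun m => by omega]
  have hW : Wsum N * (Fe N)⁻¹ = (∑ m ∈ range (N + 1), (-1 : R) ^ m * X ^ (m ^ 2) * (Fe N)⁻¹)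
      + ∑ m ∈ range N, (-1 : R) ^ (m + 1) * X ^ ((m + 1) ^ 2) * (Fe N)⁻¹ := by
    rw [Wsum, add_mul, Finset.sum_mul, Finset.sum_mul]
  rw [hsplit, hrefl, hW]
  refine MD.add (MD.sum fun m hm => ?_) (MD.sum fun m hm => ?_)
  · have hm' : m ≤ N := by have := Finset.mem_range.1 hm; omega
    rw [dd_left N m hm',
      neg_one_pow_eq_of_even_add (a := N + (N - m)) (b := m) ⟨N, by omega⟩]
    by_cases hsq : m ^ 2 ≤ n
    · have h2m : 2 * m ≤ n + 1 := by nlinarith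
      exact MD.mul MD.rfl (gb2_trunc n N (N - m) (by omega) (by omega) (by omega) (by omega))
    · have e1 : (-1 : R) ^ m * X ^ (m ^ 2) * gb2 (2 * N) ((N - m : ℕ) : ℤ)
          = X ^ (m ^ 2) * ((-1 : R) ^ m * gb2 (2 * N) ((N - m : ℕ) : ℤ)) := by ring
      have e2 : (-1 : R) ^ m * X ^ (m ^ 2) * (Fe N)⁻¹
          = X ^ (m ^ 2) * ((-1 : R) ^ m * (Fe N)⁻¹) := by ring
      rw [e1, e2]
      exact (MD_X_pow_mul (by omega) _).trans (MD_X_pow_mul (by omega) _).symm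
  · have hm' : m < N := Finset.mem_range.1 hm
    rw [dd_right N m,
      neg_one_pow_eq_of_even_add (a := N + (N + 1 + m)) (b := m + 1) ⟨N + m + 1, by omega⟩]
    by_cases hsq : (m + 1) ^ 2 ≤ n
    · have h2m : 2 * (m + 1) ≤ n + 1 := by nlinarith
      exact MD.mul MD.rfl (gb2_trunc n N (N + 1 + m) (by omega) (by omega) (by omega) (by omega))
    · have e1 : (-1 : R) ^ (m + 1) * X ^ ((m + 1) ^ 2) * gb2 (2 * N) ((N + 1 + m : ℕ))
          = X ^ ((m + 1) ^ 2) * ((-1 : R) ^ (m + 1) * gb2 (2 * N) ((N + 1 + m : ℕ))) := by ring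
      have e2 : (-1 : R) ^ (m + 1) * X ^ ((m + 1) ^ 2) * (Fe N)⁻¹
          = X ^ ((m + 1) ^ 2) * ((-1 : R) ^ (m + 1) * (Fe N)⁻¹) := by ring
      rw [e1, e2]
      exact (MD_X_pow_mul (by omega) _).trans (MD_X_pow_mul (by omega) _).symm

lemma Th_trunc (n : ℕ) : MD n Th (Wsum (n + 1)) := by
  set N := n + 1 with hN
  refine MD.of_coeff fun k hk => ?_
  have hterm : ∀ (m e : ℕ), coeff k ((-1 : R) ^ m * X ^ e)
      = (-1 : ℚ) ^ m * (if k = e then 1 else 0) := by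
    intro m e
    rw [show ((-1 : R) ^ m) = PowerSeries.C ((-1 : ℚ) ^ m) by simp, coeff_C_mul, coeff_X_pow]
  rw [Th, coeff_mk, Wsum, map_add, map_sum, map_sum]
  simp only [hterm]
  by_cases hsq : Nat.sqrt k ^ 2 = k
  · set m₀ := Nat.sqrt k with hm₀
    have hm₀n : m₀ ≤ n := le_trans (Nat.sqrt_le_self k) hk
    rw [if_pos hsq]
    have h1 : ∑ m ∈ range (N + 1), (-1 : ℚ) ^ m * (if k = m ^ 2 then 1 else 0)
        = (-1 : ℚ) ^ m₀ := by
      rw [Finset.sum_eq_single_of_mem m₀ (Finset.mem_range.2 (by omega))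
        (fun b _ hb => by
          rw [if_neg fun hkb => hb (by rw [hm₀, hkb, Nat.sqrt_eq']), mul_zero])]
      rw [if_pos hsq.symm, mul_one]
    rw [h1]
    rcases Nat.eq_zero_or_pos m₀ with h0 | hpos
    · have h2 : ∑ m ∈ range N, (-1 : ℚ) ^ (m + 1) * (if k = (m + 1) ^ 2 then 1 else 0) = 0 :=
        Finset.sum_eq_zero fun b _ => by
          rw [if_neg fun hkb => by
            have : m₀ = b + 1 := by rw [hm₀, hkb, Nat.sqrt_eq']
            omega, mul_zero]
      rw [h2, h0]
      have hk0 : k = 0 := by rw [← hsq, h0]; ring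
      simp [s, hk0]
    · have h2 : ∑ m ∈ range N, (-1 : ℚ) ^ (m + 1) * (if k = (m + 1) ^ 2 then 1 else 0)
          = (-1 : ℚ) ^ m₀ := by
        rw [Finset.sum_eq_single_of_mem (m₀ - 1) (Finset.mem_range.2 (by omega))
          (fun b _ hb => by
            rw [if_neg fun hkb => by
              have : m₀ = b + 1 := by rw [hm₀, hkb, Nat.sqrt_eq']
              omega, mul_zero])]
        rw [show m₀ - 1 + 1 = m₀ by omega, if_pos hsq.symm, mul_one]
      rw [h2, s, if_neg (by omega : m₀ ≠ 0)]
      push_cast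
      ring
  · rw [if_neg hsq]
    have h1 : ∑ m ∈ range (N + 1), (-1 : ℚ) ^ m * (if k = m ^ 2 then 1 else 0) = 0 :=
      Finset.sum_eq_zero fun b _ => by
        rw [if_neg fun hkb => hsq (by rw [hkb, Nat.sqrt_eq']), mul_zero]
    have h2 : ∑ m ∈ range N, (-1 : ℚ) ^ (m + 1) * (if k = (m + 1) ^ 2 then 1 else 0) = 0 :=
      Finset.sum_eq_zero fun b _ => by
        rw [if_neg fun hkb => hsq (by rw [hkb, Nat.sqrt_eq']), mul_zero]
    rw [h1, h2, add_zero]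

lemma gauss_mod (n : ℕ) : MD n Th (Fo (n + 1) ^ 2 * Fe (n + 1)) := by
  set N := n + 1 with hN
  have h1 : MD n (Fo N ^ 2) (Wsum N * (Fe N)⁻¹) := by
    have := Vsum_trunc n
    rwa [gauss_finite N] at this
  have h3 : Wsum N = (Wsum N * (Fe N)⁻¹) * Fe N := by
    rw [mul_assoc, mul_comm ((Fe N)⁻¹), Fe_mul_inv, mul_one]
  refine (Th_trunc n).trans ?_
  rw [h3]
  exact (h1.symm).mul MD.rfl
section ArchiveCopy
open scoped Classical
open Finset.HasAntidiagonal
variable {α : Type*}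

def indicatorSeries (α : Type*) [Semiring α] (s : Set ℕ) : PowerSeries α :=
  PowerSeries.mk fun n => if n ∈ s then 1 else 0

theorem coeff_indicator (s : Set ℕ) [Semiring α] (n : ℕ) :
    coeff n (indicatorSeries α s) = if n ∈ s then 1 else 0 :=
  coeff_mk _ _

theorem coeff_indicator_pos (s : Set ℕ) [Semiring α] (n : ℕ) (h : n ∈ s) :
    coeff n (indicatorSeries α s) = 1 := by rw [coeff_indicator, if_pos h]

theorem coeff_indicator_neg (s : Set ℕ) [Semiring α] (n : ℕ) (h : n ∉ s) :
    coeff n (indicatorSeries α s) = 0 := by rw [coeff_indicator, if_neg h]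

theorem constantCoeff_indicator (s : Set ℕ) [Semiring α] :
    constantCoeff (indicatorSeries α s) = if 0 ∈ s then 1 else 0 :=
  rfl

theorem two_series (i : ℕ) [Semiring α] :
    1 + (X : PowerSeries α) ^ i.succ = indicatorSeries α {0, i.succ} := by
  ext n
  simp only [coeff_indicator, coeff_one, coeff_X_pow, Set.mem_insert_iff, Set.mem_singleton_iff,
    map_add]
  cases' n with d
  · simp [(Nat.succ_ne_zero i).symm]
  · simp [Nat.succ_ne_zero d]

theorem num_series' [Field α] (i : ℕ) :
    (1 - (X : PowerSeries α) ^ (i + 1))⁻¹ = indicatorSeries α {k | i + 1 ∣ k} := by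
  rw [PowerSeries.inv_eq_iff_mul_eq_one]
  · ext n
    cases n with
    | zero => simp [mul_sub, zero_pow, constantCoeff_indicator]
    | succ n =>
      simp only [coeff_one, if_false, mul_sub, mul_one, coeff_indicator,
        LinearMap.map_sub, reduceCtorEq]
      simp_rw [coeff_mul, coeff_X_pow, coeff_indicator, @boole_mul _ _ _ _]
      simp only [Set.mem_setOf_eq]
      rw [sum_ite, sum_ite]
      simp_rw [@filter_filter _ _ _ _ _, sum_const_zero, add_zero, sum_const, nsmul_eq_mul, mul_one,
        sub_eq_iff_eq_add, zero_add]
      symm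
      split_ifs with h
      · suffices #{a ∈ antidiagonal (n + 1) | i + 1 ∣ a.fst ∧ a.snd = i + 1} = 1 by
          convert congr_arg ((↑) : ℕ → α) this; norm_cast
        rw [card_eq_one]
        cases' h with p hp
        refine ⟨((i + 1) * (p - 1), i + 1), ?_⟩
        ext ⟨a₁, a₂⟩
        simp only [mem_filter, Prod.mk.injEq, HasAntidiagonal.mem_antidiagonal, mem_singleton]
        constructor
        · rintro ⟨a_left, ⟨a, rfl⟩, rfl⟩
          refine ⟨?_, rfl⟩
          rw [Nat.mul_sub_left_distrib, ← hp, ← a_left, mul_one, Nat.add_sub_cancel]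
        · rintro ⟨rfl, rfl⟩
          match p with
          | 0 => rw [mul_zero] at hp; cases hp
          | p + 1 => rw [hp]; simp [mul_add]
      · suffices #{a ∈ antidiagonal (n + 1) | i + 1 ∣ a.fst ∧ a.snd = i + 1} = 0 by
          convert congr_arg ((↑) : ℕ → α) this; norm_cast
        rw [card_eq_zero]
        apply eq_empty_of_forall_notMem
        simp only [Prod.forall, mem_filter, not_and, HasAntidiagonal.mem_antidiagonal]
        rintro _ h₁ h₂ ⟨a, rfl⟩ rfl
        apply h
        simp [← h₂]
  · rw [map_sub, map_one, map_pow, constantCoeff_X, zero_pow (by omega : i + 1 ≠ 0), sub_zero]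
    exact one_ne_zero
-- The main workhorse of the partition theorem proof.
theorem partialGF_prop (α : Type*) [CommSemiring α] (n : ℕ) (s : Finset ℕ) (hs : ∀ i ∈ s, 0 < i)
    (c : ℕ → Set ℕ) (hc : ∀ i, i ∉ s → 0 ∈ c i) :
    #{p : n.Partition | (∀ j, p.parts.count j ∈ c j) ∧ ∀ j ∈ p.parts, j ∈ s} =
      coeff n (∏ i ∈ s, indicatorSeries α ((· * i) '' c i)) := by
  simp_rw [coeff_prod, coeff_indicator, prod_boole, sum_boole]
  apply congr_arg
  simp only [mem_univ, forall_true_left, not_and, not_forall, exists_prop,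
    Set.mem_image, not_exists]
  set φ : (a : Nat.Partition n) →
    a ∈ filter (fun p ↦ (∀ (j : ℕ), Multiset.count j p.parts ∈ c j) ∧ ∀ j ∈ p.parts, j ∈ s) univ →
    ℕ →₀ ℕ := fun p _ => {
      toFun := fun i => Multiset.count i p.parts • i
      support := Finset.filter (fun i => i ≠ 0) p.parts.toFinset
      mem_support_toFun := fun a => by
        simp only [smul_eq_mul, ne_eq, mul_eq_zero, Multiset.count_eq_zero]
        rw [not_or, not_not]
        simp only [Multiset.mem_toFinset, not_not, mem_filter] }
  refine Finset.card_bij φ ?_ ?_ ?_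
  · intro a ha
    simp only [φ, not_forall, not_exists, not_and, exists_prop, mem_filter]
    rw [mem_finsuppAntidiag]
    dsimp only [ne_eq, smul_eq_mul, id_eq, eq_mpr_eq_cast, le_eq_subset, Finsupp.coe_mk]
    simp only [mem_univ, forall_true_left, not_and, not_forall, exists_prop,
      mem_filter, true_and] at ha
    refine ⟨⟨?_, fun i ↦ ?_⟩, fun i _ ↦ ⟨a.parts.count i, ha.1 i, rfl⟩⟩
    · conv_rhs => simp [← a.parts_sum]
      rw [sum_multiset_count_of_subset _ s]
      · simp only [smul_eq_mul]
      · intro i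
        simp only [Multiset.mem_toFinset, not_not, mem_filter]
        apply ha.2
    · simp only [ne_eq, Multiset.mem_toFinset, not_not, mem_filter, and_imp]
      exact fun hi _ ↦ ha.2 i hi
  · intro p₁ hp₁ p₂ hp₂ h
    apply Nat.Partition.ext
    simp only [true_and, mem_univ, mem_filter] at hp₁ hp₂
    ext i
    simp only [φ, ne_eq, Multiset.mem_toFinset, not_not, smul_eq_mul, Finsupp.mk.injEq] at h
    by_cases hi : i = 0
    · rw [hi]
      rw [Multiset.count_eq_zero_of_notMem]
      · rw [Multiset.count_eq_zero_of_notMem]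
        intro a; exact Nat.lt_irrefl 0 (hs 0 (hp₂.2 0 a))
      intro a; exact Nat.lt_irrefl 0 (hs 0 (hp₁.2 0 a))
    · rw [← mul_left_inj' hi]
      rw [funext_iff] at h
      exact h.2 i
  · simp only [φ, mem_filter, mem_finsuppAntidiag, mem_univ, exists_prop, true_and, and_assoc]
    rintro f ⟨hf, hf₃, hf₄⟩
    have hf' : f ∈ finsuppAntidiag s n := mem_finsuppAntidiag.mpr ⟨hf, hf₃⟩
    simp only [mem_finsuppAntidiag] at hf'
    refine ⟨⟨∑ i ∈ s, Multiset.replicate (f i / i) i, ?_, ?_⟩, ?_, ?_, ?_⟩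
    · intro i hi
      simp only [exists_prop, Multiset.mem_sum, mem_map, Function.Embedding.coeFn_mk] at hi
      rcases hi with ⟨t, ht, z⟩
      apply hs
      rwa [Multiset.eq_of_mem_replicate z]
    · simp_rw [Multiset.sum_sum, Multiset.sum_replicate, Nat.nsmul_eq_mul]
      rw [← hf'.1]
      refine sum_congr rfl fun i hi => Nat.div_mul_cancel ?_
      rcases hf₄ i hi with ⟨w, _, hw₂⟩
      rw [← hw₂]
      exact dvd_mul_left _ _
    · intro i
      simp_rw [Multiset.count_sum', Multiset.count_replicate, sum_ite_eq']
      split_ifs with h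
      · rcases hf₄ i h with ⟨w, hw₁, hw₂⟩
        rwa [← hw₂, Nat.mul_div_cancel _ (hs i h)]
      · exact hc _ h
    · intro i hi
      rw [Multiset.mem_sum] at hi
      rcases hi with ⟨j, hj₁, hj₂⟩
      rwa [Multiset.eq_of_mem_replicate hj₂]
    · ext i
      simp_rw [Multiset.count_sum', Multiset.count_replicate, sum_ite_eq']
      simp only [ne_eq, Multiset.mem_toFinset, not_not, smul_eq_mul, ite_mul,
        zero_mul, Finsupp.coe_mk]
      split_ifs with h
      · apply Nat.div_mul_cancel
        rcases hf₄ i h with ⟨w, _, hw₂⟩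
        apply Dvd.intro_left _ hw₂
      · apply symm
        rw [← Finsupp.notMem_support_iff]
        exact notMem_mono hf'.2 h

end ArchiveCopy

def mkS : ℕ ↪ ℕ := ⟨fun i => i + 1, fun x y h => by simpa using h⟩

open scoped Classical in
theorem allGF_prop (n L : ℕ) :
    #{pp : n.Partition | ∀ j ∈ pp.parts, j ∈ (range L).map mkS} =
      coeff (R := ℚ) n (∏ i ∈ range L, (1 - (X : R) ^ (i + 1))⁻¹) := by
  convert partialGF_prop ℚ n ((range L).map mkS) _ (fun _ => Set.univ) (fun _ _ => trivial)
    using 2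
  · congr
  · congr
    simp only [true_and, forall_const, Set.mem_univ]
  · rw [Finset.prod_map]
    simp_rw [num_series']
    congr! 2 with x
    ext k
    constructor
    · rintro ⟨q, rfl⟩
      refine ⟨q, ⟨⟩, ?_⟩
      apply mul_comm
    rintro ⟨a_w, -, rfl⟩
    apply Dvd.intro_left a_w rfl
  · intro i
    rw [mem_map]
    rintro ⟨a, -, rfl⟩
    exact Nat.succ_pos _

def Pinv (L : ℕ) : R := ∏ i ∈ range L, (1 - X ^ (i + 1))⁻¹

lemma coeff_Pinv (n L : ℕ) (h : n ≤ L) : coeff n (Pinv L) = (p n : ℚ) := by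
  classical
  rw [Pinv, ← allGF_prop n L]
  norm_cast
  rw [p]
  rw [Fintype.card]
  congr 1
  apply Finset.filter_true_of_mem
  intro pp _
  intro j hj
  have hpos : 0 < j := pp.parts_pos hj
  have hle : j ≤ n := by
    simpa [pp.parts_sum] using Multiset.single_le_sum (fun _ _ => Nat.zero_le _) _ hj
  rw [Finset.mem_map]
  exact ⟨j - 1, Finset.mem_range.2 (by omega), by show j - 1 + 1 = j; omega⟩

def Pser : R := PowerSeries.mk fun k => (p k : ℚ)

lemma P_mod (n L : ℕ) (h : n ≤ L) : MD n Pser (Pinv L) :=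
  MD.of_coeff fun k hk => by
    rw [Pser, coeff_mk, coeff_Pinv k L (by omega)]

lemma Fa_mul_Pinv (L : ℕ) : Fa L * Pinv L = 1 := by
  rw [Fa, Pinv, ← Finset.prod_mul_distrib]
  exact Finset.prod_eq_one fun i _ =>
    PowerSeries.mul_inv_cancel _ (by
      rw [constCoeff_one_sub_X_pow _ (by omega)]; norm_num)

def Qinv (L : ℕ) : R := ∏ i ∈ range L, (1 - X ^ (2 * i + 2))⁻¹

lemma Fe_mul_Qinv (L : ℕ) : Fe L * Qinv L = 1 := by
  rw [Fe, Qinv, ← Finset.prod_mul_distrib]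
  exact Finset.prod_eq_one fun i _ =>
    PowerSeries.mul_inv_cancel _ (by
      rw [constCoeff_one_sub_X_pow _ (by omega)]; norm_num)

/-- substitution `X ↦ X²` on the level of coefficients. -/
def sq2 (f : R) : R := PowerSeries.mk fun k => if 2 ∣ k then coeff (k / 2) f else 0

lemma sq2_one : sq2 1 = 1 := by
  ext k
  rw [sq2, coeff_mk]
  by_cases h2 : 2 ∣ k
  · rw [if_pos h2, PowerSeries.coeff_one, PowerSeries.coeff_one]
    by_cases hk : k = 0
    · subst hk; norm_num
    · rw [if_neg (by omega : ¬ k / 2 = 0), if_neg hk]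
  · rw [if_neg h2, PowerSeries.coeff_one, if_neg (by omega : ¬ k = 0)]

lemma sq2_mul (f g : R) : sq2 (f * g) = sq2 f * sq2 g := by
  ext k
  rw [PowerSeries.coeff_mul, sq2, coeff_mk]
  by_cases h2 : 2 ∣ k
  · obtain ⟨c, rfl⟩ := h2
    rw [if_pos ⟨c, rfl⟩, Nat.mul_div_cancel_left c (by norm_num), PowerSeries.coeff_mul,
      Finset.Nat.sum_antidiagonal_eq_sum_range_succ_mk,
      Finset.Nat.sum_antidiagonal_eq_sum_range_succ_mk]
    have hz : ∀ a ∈ range (2 * c + 1),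
        coeff a (sq2 f) * coeff (2 * c - a) (sq2 g) ≠ 0 → 2 ∣ a := by
      intro a _ hne
      by_contra hodd
      apply hne
      rw [sq2, coeff_mk, if_neg hodd, zero_mul]
    rw [← Finset.sum_filter_of_ne hz]
    symm
    refine Finset.sum_nbij' (fun a => a / 2) (fun b => 2 * b) ?_ ?_ ?_ ?_ ?_
    · intro a ha
      simp only [Finset.mem_filter, Finset.mem_range] at ha
      exact Finset.mem_range.2 (by omega)
    · intro b hb
      simp only [Finset.mem_range] at hb
      simp only [Finset.mem_filter, Finset.mem_range]
      omega
    · intro a ha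
      simp only [Finset.mem_filter, Finset.mem_range] at ha
      omega
    · intro b _
      show 2 * b / 2 = b
      omega
    · intro a ha
      simp only [Finset.mem_filter, Finset.mem_range] at ha
      obtain ⟨hlt, b, rfl⟩ := ha
      simp only [sq2, coeff_mk]
      rw [if_pos (by omega : 2 ∣ 2 * b), if_pos (by omega : 2 ∣ 2 * c - 2 * b)]
      rw [Nat.mul_div_cancel_left b (by norm_num),
        show (2 * c - 2 * b) / 2 = c - b by omega]
  · rw [if_neg h2]
    symm
    apply Finset.sum_eq_zero
    intro ij hij
    have hsum := Finset.HasAntidiagonal.mem_antidiagonal.1 hij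
    rcases Nat.even_or_odd ij.1 with he | ho
    · have hno : ¬ 2 ∣ ij.2 := by
        rcases he with ⟨t, ht⟩
        rintro ⟨u, hu⟩
        exact h2 ⟨t + u, by omega⟩
      simp only [sq2, coeff_mk]
      rw [if_neg hno, mul_zero]
    · have hno : ¬ 2 ∣ ij.1 := by
        rcases ho with ⟨t, ht⟩
        rintro ⟨u, hu⟩
        omega
      simp only [sq2, coeff_mk]
      rw [if_neg hno, zero_mul]

lemma sq2_one_sub_pow (j : ℕ) : sq2 (1 - X ^ j) = 1 - X ^ (2 * j) := by
  ext k
  rw [sq2, coeff_mk]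
  by_cases h2 : 2 ∣ k
  · obtain ⟨c, rfl⟩ := h2
    rw [if_pos ⟨c, rfl⟩, Nat.mul_div_cancel_left c (by norm_num), map_sub, map_sub,
      PowerSeries.coeff_one, PowerSeries.coeff_one, coeff_X_pow, coeff_X_pow]
    congr 1
    · by_cases hc : c = 0
      · rw [if_pos hc, if_pos (by omega)]
      · rw [if_neg hc, if_neg (by omega)]
    · by_cases hc : c = j
      · rw [if_pos hc, if_pos (by omega)]
      · rw [if_neg hc, if_neg (by omega)]
  · rw [if_neg h2, map_sub, PowerSeries.coeff_one, coeff_X_pow,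
      if_neg (by omega : ¬ k = 0), if_neg (by
        intro hkk
        exact h2 (by rw [hkk]; exact ⟨j, rfl⟩)), sub_zero]

lemma sq2_Fa (L : ℕ) : sq2 (Fa L) = Fe L := by
  induction L with
  | zero => simp [Fa, Fe, sq2_one]
  | succ L ih =>
    rw [Fa, Finset.prod_range_succ, ← Fa, sq2_mul, ih, sq2_one_sub_pow,
      show Fe (L + 1) = Fe L * (1 - X ^ (2 * L + 2)) from by
        rw [Fe, Finset.prod_range_succ, ← Fe],
      show 2 * (L + 1) = 2 * L + 2 by ring]

lemma sq2_Pinv (L : ℕ) : sq2 (Pinv L) = Qinv L := by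
  have h1 : sq2 (Pinv L) * Fe L = 1 := by
    rw [← sq2_Fa, ← sq2_mul, mul_comm, Fa_mul_Pinv, sq2_one]
  calc sq2 (Pinv L) = sq2 (Pinv L) * (Fe L * Qinv L) := by rw [Fe_mul_Qinv, mul_one]
    _ = (sq2 (Pinv L) * Fe L) * Qinv L := by ring
    _ = Qinv L := by rw [h1, one_mul]

lemma sq2_MD {n : ℕ} {f g : R} (h : MD n f g) : MD n (sq2 f) (sq2 g) :=
  MD.of_coeff fun k hk => by
    rw [sq2, coeff_mk, sq2, coeff_mk]
    by_cases h2 : 2 ∣ k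
    · rw [if_pos h2, if_pos h2, h.coeff_eq (by omega)]
    · rw [if_neg h2, if_neg h2]

def P2ser : R := PowerSeries.mk fun k => (p₂ k : ℚ)

lemma Pser_coeff (a : ℕ) : coeff a Pser = (p a : ℚ) := coeff_mk _ _

lemma coeff_mul_range (f g : R) (n : ℕ) :
    coeff n (f * g) = ∑ a ∈ range (n + 1), coeff a f * coeff (n - a) g := by
  rw [PowerSeries.coeff_mul, Finset.Nat.sum_antidiagonal_eq_sum_range_succ_mk]

lemma P2ser_eq : P2ser = Pser * sq2 Pser := by
  ext k
  rw [P2ser, coeff_mk, coeff_mul_range]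
  have hterm : ∀ a, coeff a Pser * coeff (k - a) (sq2 Pser)
      = if 2 ∣ (k - a) then ((p a : ℚ) * (p ((k - a) / 2) : ℚ)) else 0 := by
    intro a
    rw [Pser_coeff, sq2, coeff_mk]
    split_ifs with h
    · rw [Pser_coeff]
    · rw [mul_zero]
  rw [Finset.sum_congr rfl fun a _ => hterm a, ← Finset.sum_filter]
  rw [p₂]
  push_cast
  refine Finset.sum_nbij' (fun ij => ij.1) (fun a => (a, (k - a) / 2)) ?_ ?_ ?_ ?_ ?_
  · intro ij hij
    simp only [Finset.mem_filter, Finset.mem_product, Finset.mem_range] at hij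
    simp only [Finset.mem_filter, Finset.mem_range]
    omega
  · intro a ha
    simp only [Finset.mem_filter, Finset.mem_range] at ha
    simp only [Finset.mem_filter, Finset.mem_product, Finset.mem_range]
    omega
  · intro ij hij
    simp only [Finset.mem_filter, Finset.mem_product, Finset.mem_range] at hij
    have : (k - ij.1) / 2 = ij.2 := by omega
    exact Prod.ext rfl this
  · intro a ha
    rfl
  · intro ij hij
    simp only [Finset.mem_filter, Finset.mem_product, Finset.mem_range] at hij
    have : (k - ij.1) / 2 = ij.2 := by omega
    rw [this]

lemma key_coeff (n : ℕ) : coeff n P2ser = coeff n (Th * (Pser * Pser * Pser)) := by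
  set N := n + 1 with hN
  set L := 2 * N with hL
  have hGauss : MD n Th (Fo N ^ 2 * Fe N) := gauss_mod n
  have hP : MD n Pser (Pinv L) := P_mod n L (by omega)
  have hmain : MD n (Th * (Pser * Pser * Pser))
      ((Fo N ^ 2 * Fe N) * (Pinv L * Pinv L * Pinv L)) :=
    hGauss.mul ((hP.mul hP).mul hP)
  have hX : (Fo N ^ 2 * Fe N * (Pinv L * Pinv L)) * Fe N = 1 := by
    have h1 : (Fo N ^ 2 * Fe N * (Pinv L * Pinv L)) * Fe N
        = (Fa L * Pinv L) * (Fa L * Pinv L) := by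
      rw [hL, Fa_two_mul]
      ring
    rw [h1, Fa_mul_Pinv, one_mul]
  have hXQ : Fo N ^ 2 * Fe N * (Pinv L * Pinv L) = Qinv N := by
    calc Fo N ^ 2 * Fe N * (Pinv L * Pinv L)
        = (Fo N ^ 2 * Fe N * (Pinv L * Pinv L)) * (Fe N * Qinv N) := by
          rw [Fe_mul_Qinv, mul_one]
      _ = ((Fo N ^ 2 * Fe N * (Pinv L * Pinv L)) * Fe N) * Qinv N := by ring
      _ = Qinv N := by rw [hX, one_mul]
  have heq : (Fo N ^ 2 * Fe N) * (Pinv L * Pinv L * Pinv L) = Pinv L * Qinv N := by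
    rw [← hXQ]
    ring
  rw [heq] at hmain
  have hQ : MD n (Qinv N) (sq2 Pser) := by
    have := sq2_MD (P_mod n N (by omega))
    rw [sq2_Pinv] at this
    exact this.symm
  have hfin : MD n (Pinv L * Qinv N) (Pser * sq2 Pser) := (hP.symm).mul hQ
  rw [P2ser_eq]
  exact ((hmain.trans hfin).coeff_eq le_rfl).symm

lemma Th_coeff_expand (n u : ℕ) (hu : u ≤ n) :
    coeff u Th = ∑ m ∈ range (n + 1), (if u = m ^ 2 then (s m : ℚ) else 0) := by
  rw [Th, coeff_mk]
  by_cases hsq : Nat.sqrt u ^ 2 = u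
  · rw [if_pos hsq]
    rw [Finset.sum_eq_single_of_mem (Nat.sqrt u)
      (Finset.mem_range.2 (by have := Nat.sqrt_le_self u; omega))
      (fun b _ hb => by
        rw [if_neg fun hub => hb (by rw [hub, Nat.sqrt_eq'])])]
    rw [if_pos hsq.symm]
  · rw [if_neg hsq]
    symm
    exact Finset.sum_eq_zero fun b _ => by
      rw [if_neg fun hub => hsq (by rw [hub, Nat.sqrt_eq'])]

/-- triple coefficient -/
lemma triple_coeff (v : ℕ) : coeff v (Pser * (Pser * Pser))
    = ∑ i ∈ range (v + 1), (p i : ℚ) *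
        ∑ j ∈ range (v - i + 1), (p j : ℚ) * (p (v - i - j) : ℚ) := by
  rw [coeff_mul_range]
  refine Finset.sum_congr rfl fun i _ => ?_
  rw [Pser_coeff, coeff_mul_range]
  congr 1
  refine Finset.sum_congr rfl fun j _ => ?_
  rw [Pser_coeff, Pser_coeff]

lemma inner_sum (n v : ℕ) (hv : v ≤ n) (c : ℚ) :
    (∑ i ∈ range (n + 1), ∑ j ∈ range (n + 1), ∑ k ∈ range (n + 1),
      (if i + j + k = v then c * ((p i : ℚ) * (p j : ℚ) * (p k : ℚ)) else 0))
    = c * coeff v (Pser * (Pser * Pser)) := by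
  rw [triple_coeff]
  have hk : ∀ i j : ℕ, (∑ k ∈ range (n + 1),
      (if i + j + k = v then c * ((p i : ℚ) * (p j : ℚ) * (p k : ℚ)) else 0))
      = if i + j ≤ v then c * ((p i : ℚ) * (p j : ℚ) * (p (v - i - j) : ℚ)) else 0 := by
    intro i j
    by_cases hij : i + j ≤ v
    · rw [if_pos hij]
      rw [Finset.sum_eq_single_of_mem (v - i - j) (Finset.mem_range.2 (by omega))
        (fun b _ hb => by rw [if_neg (by omega)])]
      rw [if_pos (by omega)]
    · rw [if_neg hij]
      exact Finset.sum_eq_zero fun b _ => by rw [if_neg (by omega)]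
  have hj : ∀ i : ℕ, i ≤ v → (∑ j ∈ range (n + 1),
      (if i + j ≤ v then c * ((p i : ℚ) * (p j : ℚ) * (p (v - i - j) : ℚ)) else 0))
      = c * ((p i : ℚ) * ∑ j ∈ range (v - i + 1), (p j : ℚ) * (p (v - i - j) : ℚ)) := by
    intro i hi
    rw [← Finset.sum_subset (Finset.range_subset_range.2 (by omega : v - i + 1 ≤ n + 1))
      (fun x _ hx => by
        rw [if_neg (by
          simp only [Finset.mem_range] at hx
          omega)])]
    rw [Finset.mul_sum, Finset.mul_sum]
    refine Finset.sum_congr rfl fun j hj => ?_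
    have : i + j ≤ v := by
      simp only [Finset.mem_range] at hj
      omega
    rw [if_pos this]
    ring
  calc ∑ i ∈ range (n + 1), ∑ j ∈ range (n + 1), ∑ k ∈ range (n + 1),
        (if i + j + k = v then c * ((p i : ℚ) * (p j : ℚ) * (p k : ℚ)) else 0)
      = ∑ i ∈ range (n + 1),
          (if i ≤ v then c * ((p i : ℚ) * ∑ j ∈ range (v - i + 1),
            (p j : ℚ) * (p (v - i - j) : ℚ)) else 0) := by
        refine Finset.sum_congr rfl fun i _ => ?_
        rw [Finset.sum_congr rfl fun j _ => hk i j]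
        by_cases hi : i ≤ v
        · rw [if_pos hi, hj i hi]
        · rw [if_neg hi]
          exact Finset.sum_eq_zero fun b _ => by rw [if_neg (by omega)]
    _ = ∑ i ∈ range (v + 1), c * ((p i : ℚ) * ∑ j ∈ range (v - i + 1),
          (p j : ℚ) * (p (v - i - j) : ℚ)) := by
        rw [← Finset.sum_subset (Finset.range_subset_range.2 (by omega : v + 1 ≤ n + 1))
          (fun x _ hx => by
            rw [if_neg (by
              simp only [Finset.mem_range] at hx
              omega)])]
        refine Finset.sum_congr rfl fun i hi => ?_
        rw [if_pos (by simp only [Finset.mem_range] at hi; omega)]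
    _ = c * ∑ i ∈ range (v + 1), (p i : ℚ) * ∑ j ∈ range (v - i + 1),
          (p j : ℚ) * (p (v - i - j) : ℚ) := by rw [Finset.mul_sum]

lemma extraction (n : ℕ) :
    coeff n (Th * (Pser * (Pser * Pser))) =
      ∑ x ∈ ((range (n + 1) ×ˢ range (n + 1)) ×ˢ (range (n + 1) ×ˢ range (n + 1))).filter
          (fun x => x.1.1 ^ 2 + x.1.2 + x.2.1 + x.2.2 = n),
        (s x.1.1 : ℚ) * ((p x.1.2 : ℚ) * (p x.2.1 : ℚ) * (p x.2.2 : ℚ)) := by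
  rw [coeff_mul_range]
  have hTh : ∀ u ∈ range (n + 1), coeff u Th * coeff (n - u) (Pser * (Pser * Pser))
      = ∑ m ∈ range (n + 1),
          (if u = m ^ 2 then (s m : ℚ) * coeff (n - u) (Pser * (Pser * Pser)) else 0) := by
    intro u hu
    rw [Th_coeff_expand n u (by simp only [Finset.mem_range] at hu; omega), Finset.sum_mul]
    exact Finset.sum_congr rfl fun m _ => by rw [ite_mul, zero_mul]
  rw [Finset.sum_congr rfl hTh, Finset.sum_comm]
  have hsum_u : ∀ m, (∑ u ∈ range (n + 1),
      (if u = m ^ 2 then (s m : ℚ) * coeff (n - u) (Pser * (Pser * Pser)) else 0))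
      = if m ^ 2 ≤ n then (s m : ℚ) * coeff (n - m ^ 2) (Pser * (Pser * Pser)) else 0 := by
    intro m
    rw [Finset.sum_ite_eq' (range (n + 1)) (m ^ 2)
      (fun u => (s m : ℚ) * coeff (n - u) (Pser * (Pser * Pser)))]
    simp only [Finset.mem_range, Nat.lt_succ_iff]
  rw [Finset.sum_congr rfl fun m _ => hsum_u m]
  rw [Finset.sum_filter]
  simp only [Finset.sum_product]
  refine Finset.sum_congr rfl fun m _ => ?_
  by_cases hm : m ^ 2 ≤ n
  · rw [if_pos hm, ← inner_sum n (n - m ^ 2) (by omega) ((s m : ℚ))]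
    refine Finset.sum_congr rfl fun i _ => Finset.sum_congr rfl fun j _ =>
      Finset.sum_congr rfl fun k _ => ?_
    have hiff : i + j + k = n - m ^ 2 ↔ m ^ 2 + i + j + k = n := by
      obtain ⟨u, hu⟩ : ∃ u, u = m ^ 2 := ⟨_, rfl⟩
      rw [← hu] at hm ⊢
      omega
    exact if_congr hiff rfl rfl
  · rw [if_neg hm]
    symm
    refine Finset.sum_eq_zero fun i _ => Finset.sum_eq_zero fun j _ =>
      Finset.sum_eq_zero fun k _ => ?_
    have hneg : ¬ (m ^ 2 + i + j + k = n) := by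
      obtain ⟨u, hu⟩ : ∃ u, u = m ^ 2 := ⟨_, rfl⟩
      rw [← hu] at hm ⊢
      omega
    rw [if_neg hneg]

lemma main_q (n : ℕ) :
    (p₂ n : ℚ) =
      ∑ x ∈ ((range (n + 1) ×ˢ range (n + 1)) ×ˢ (range (n + 1) ×ˢ range (n + 1))).filter
          (fun x => x.1.1 ^ 2 + x.1.2 + x.2.1 + x.2.2 = n),
        (s x.1.1 : ℚ) * ((p x.1.2 : ℚ) * (p x.2.1 : ℚ) * (p x.2.2 : ℚ)) := by
  calc (p₂ n : ℚ) = coeff n P2ser := by rw [P2ser, coeff_mk]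
    _ = coeff n (Th * (Pser * Pser * Pser)) := key_coeff n
    _ = coeff n (Th * (Pser * (Pser * Pser))) := by rw [mul_assoc Pser]
    _ = _ := extraction n
end
end CubicAux
theorem cubicPartition_eq_sum (n : ℕ) :
    (p₂ n : ℤ) =
      ∑ x ∈ ((range (n + 1) ×ˢ range (n + 1)) ×ˢ (range (n + 1) ×ˢ range (n + 1))).filter
          (fun x => x.1.1 ^ 2 + x.1.2 + x.2.1 + x.2.2 = n),
        s x.1.1 * (p x.1.2 * p x.2.1 * p x.2.2) := by
  have h := CubicAux.main_q n
  exact_mod_cast h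
end
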